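/- Let X ⊆ ℝ^m be a closed set with 0 ∈ X, let X_t = ((1/t)·X) ∩ S^{m−1} for t > 0 and X₀ = C(X,0) ∩ S^{m−1}, where C(X,0) is the tangent cone of X at 0. Suppose X_t → X₀ in the Hausdorff metric as t → 0⁺ and there exist C ≥ 1, ε > 0 such that d_{X_t}(x,y) ≤ C‖x−y‖ for all x,y ∈ X_t and all t ∈ (0,ε]. Then d_{X₀}(v,w) ≤ C‖v−w‖ for all v,w ∈ X₀, i.e. X₀ is C-LNE. -/

import Mathlib

open Set Metric Filter Topology Pointwise
open scoped ENNReal NNReal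

section VarCont
variable {E : Type*} [PseudoEMetricSpace E]

lemma evar_right_small {γ : ℝ → E} {p b : ℝ} (hpb : p ≤ b)
    (hco : ContinuousWithinAt γ (Icc p b) p)
    (hfin : eVariationOn γ (Icc p b) ≠ ⊤)
    {C : ℝ≥0∞} (hC : 0 < C) :
    ∃ q > p, ∀ t ∈ Icc p b, t ≤ q → eVariationOn γ (Icc p t) ≤ C := by
  set A := eVariationOn γ (Icc p b) with hA
  by_cases hAC : A ≤ C
  · exact ⟨b + 1, by linarith, fun t ht _ => le_trans (eVariationOn.mono γ (Icc_subset_Icc_right ht.2)) hAC⟩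
  push_neg at hAC
  have hpb' : p < b := by
    rcases eq_or_lt_of_le hpb with h | h
    · exfalso
      have : A = 0 := by
        apply eVariationOn.subsingleton
        intro x hx y hy
        have hx' : x = p := le_antisymm (h ▸ hx.2) hx.1
        have hy' : y = p := le_antisymm (h ▸ hy.2) hy.1
        rw [hx', hy']
      exact absurd hAC (by rw [this]; exact not_lt_of_ge (zero_le (a := C)))
    · exact h
  -- choose ε with ε + ε ≤ C, 0 < ε < ⊤
  obtain ⟨ε, hε0, hεtop, hεε⟩ : ∃ ε : ℝ≥0∞, 0 < ε ∧ ε ≠ ⊤ ∧ ε + ε ≤ C := by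
    refine ⟨min (C / 2) 1, lt_min (ENNReal.half_pos hC.ne') one_pos, ?_, ?_⟩
    · exact ne_top_of_le_ne_top (by simp) (min_le_right _ _)
    · calc min (C/2) 1 + min (C/2) 1 ≤ C/2 + C/2 := add_le_add (min_le_left _ _) (min_le_left _ _)
        _ = C := ENNReal.add_halves C
  have hAne : A ≠ 0 := (hC.trans hAC).ne'
  -- get a near-optimal partition
  obtain ⟨⟨n, u, hu, hus⟩, hsum⟩ :
      ∃ x : ℕ × {u : ℕ → ℝ // Monotone u ∧ ∀ i, u i ∈ Icc p b},
        A - ε < ∑ i ∈ Finset.range x.1, edist (γ (x.2.1 (i + 1))) (γ (x.2.1 i)) := by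
    have : A - ε < A := ENNReal.sub_lt_self hfin hAne hε0.ne'
    rw [hA, eVariationOn] at this ⊢
    exact lt_iSup_iff.mp this
  obtain ⟨hu, hus⟩ := And.intro hu hus
  set S := ∑ i ∈ Finset.range n, edist (γ (u (i + 1))) (γ (u i)) with hS
  have hεA : ε ≤ A := le_trans (le_trans le_self_add hεε) hAC.le
  have hAS : A ≤ S + ε := by
    calc A = A - ε + ε := (tsub_add_cancel_of_le hεA).symm
    _ ≤ S + ε := add_le_add hsum.le le_rfl
  -- continuity: pick q close to p
  set η : ℝ≥0∞ := ε / (4 * (n + 1)) with hη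
  have hden0 : (4 * ((n:ℝ≥0∞) + 1)) ≠ 0 := mul_ne_zero (by norm_num) (by simp)
  have hdentop : (4 * ((n:ℝ≥0∞) + 1)) ≠ ⊤ := by
    exact ENNReal.mul_ne_top (by simp) (by simp)
  have hη0 : 0 < η := ENNReal.div_pos hε0.ne' hdentop
  have hball : γ ⁻¹' (EMetric.ball (γ p) η) ∈ 𝓝[Icc p b] p :=
    hco (EMetric.ball_mem_nhds (γ p) hη0)
  rw [Metric.mem_nhdsWithin_iff] at hball
  obtain ⟨δ, hδ0, hδ⟩ := hball
  set q := min (p + δ/2) b with hq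
  have hpq : p < q := lt_min (by linarith) hpb'
  have hqb : q ≤ b := min_le_right _ _
  have hsmall : ∀ r ∈ Icc p q, edist (γ r) (γ p) < η := by
    intro r hr
    have hrb : r ∈ Icc p b := ⟨hr.1, hr.2.trans hqb⟩
    have hrball : r ∈ Metric.ball p δ := by
      rw [Metric.mem_ball, Real.dist_eq, abs_sub_lt_iff]
      have := hr.2.trans (min_le_left _ _)
      constructor <;> [linarith; linarith [hr.1, hδ0]]
    exact hδ ⟨hrball, hrb⟩
  set v : ℕ → ℝ := fun i => max (u i) q with hv
  have hvmono : Monotone v := fun i j hij => max_le_max (hu hij) le_rfl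
  have hvs : ∀ i, v i ∈ Icc q b := fun i => ⟨le_max_right _ _, max_le (hus i).2 hqb⟩
  have hS' : (∑ i ∈ Finset.range n, edist (γ (v (i+1))) (γ (v i))) ≤ eVariationOn γ (Icc q b) :=
    eVariationOn.sum_le (f := γ) (n := n) hvmono hvs
  have hdiff : ∀ j, edist (γ (u j)) (γ (v j)) ≤ η + η := by
    intro j
    rcases le_or_gt q (u j) with h | h
    · simp [hv, max_eq_left h]
    · have h1 : u j ∈ Icc p q := ⟨(hus j).1, h.le⟩
      have h2 : q ∈ Icc p q := ⟨hpq.le, le_rfl⟩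
      have hvq : v j = q := max_eq_right h.le
      rw [hvq]
      calc edist (γ (u j)) (γ q) ≤ edist (γ (u j)) (γ p) + edist (γ p) (γ q) :=
            edist_triangle _ _ _
        _ ≤ η + η := add_le_add (hsmall _ h1).le (by rw [edist_comm]; exact (hsmall _ h2).le)
  have hterm : ∀ i, edist (γ (u (i+1))) (γ (u i)) ≤ edist (γ (v (i+1))) (γ (v i)) + 4 * η := by
    intro i
    calc edist (γ (u (i+1))) (γ (u i))
        ≤ edist (γ (u (i+1))) (γ (v (i+1))) + edist (γ (v (i+1))) (γ (v i))
            + edist (γ (v i)) (γ (u i)) := edist_triangle4 _ _ _ _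
      _ ≤ (η+η) + edist (γ (v (i+1))) (γ (v i)) + (η+η) := by
          gcongr
          · exact hdiff (i+1)
          · rw [edist_comm]; exact hdiff i
      _ = edist (γ (v (i+1))) (γ (v i)) + 4 * η := by ring
  have hSS' : S ≤ eVariationOn γ (Icc q b) + ε := by
    calc S ≤ ∑ i ∈ Finset.range n, (edist (γ (v (i+1))) (γ (v i)) + 4*η) :=
          Finset.sum_le_sum (fun i _ => hterm i)
      _ = (∑ i ∈ Finset.range n, edist (γ (v (i+1))) (γ (v i))) + n * (4*η) := by
          rw [Finset.sum_add_distrib, Finset.sum_const, Finset.card_range, nsmul_eq_mul]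
      _ ≤ eVariationOn γ (Icc q b) + ε := by
          refine add_le_add hS' ?_
          rw [hη]
          calc (n:ℝ≥0∞) * (4 * (ε / (4*((n:ℝ≥0∞)+1)))) = ((4*(n:ℝ≥0∞))) * (ε / (4*((n:ℝ≥0∞)+1))) := by
                ring
            _ ≤ (4*((n:ℝ≥0∞)+1)) * (ε / (4*((n:ℝ≥0∞)+1))) := by
                gcongr
                exact le_self_add
            _ = ε := ENNReal.mul_div_cancel hden0 hdentop
  have hYne : eVariationOn γ (Icc q b) ≠ ⊤ :=
    ne_top_of_le_ne_top hfin (eVariationOn.mono γ (Icc_subset_Icc_left hpq.le))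
  have hadd : eVariationOn γ (Icc p q) + eVariationOn γ (Icc q b) = A := by
    have := eVariationOn.Icc_add_Icc γ (s := univ) hpq.le hqb (mem_univ q)
    simpa using this
  have hfinal : eVariationOn γ (Icc p q) ≤ C := by
    have h2 : eVariationOn γ (Icc p q) + eVariationOn γ (Icc q b) ≤
        (ε + ε) + eVariationOn γ (Icc q b) := by
      rw [hadd]
      calc A ≤ S + ε := hAS
        _ ≤ (eVariationOn γ (Icc q b) + ε) + ε := add_le_add hSS' le_rfl
        _ = (ε+ε) + eVariationOn γ (Icc q b) := by ring
    exact ((ENNReal.add_le_add_iff_right hYne).mp h2).trans hεε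
  exact ⟨q, hpq, fun t ht htq => le_trans (eVariationOn.mono γ (Icc_subset_Icc_right htq)) hfinal⟩

lemma evar_left_small {γ : ℝ → E} {a p : ℝ} (hap : a ≤ p)
    (hco : ContinuousWithinAt γ (Icc a p) p)
    (hfin : eVariationOn γ (Icc a p) ≠ ⊤)
    {C : ℝ≥0∞} (hC : 0 < C) :
    ∃ q < p, ∀ t ∈ Icc a p, q ≤ t → eVariationOn γ (Icc t p) ≤ C := by
  set γ' : ℝ → E := γ ∘ (fun z => -z) with hγ'
  have himg : ∀ x y : ℝ, (fun z : ℝ => -z) '' Icc x y = Icc (-y) (-x) := by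
    intro x y
    rw [show (fun z : ℝ => -z) = Neg.neg from rfl, Set.image_neg_eq_neg, Set.neg_Icc]
  have hanti : ∀ t : Set ℝ, AntitoneOn (fun z : ℝ => -z) t :=
    fun t x _ y _ hxy => neg_le_neg hxy
  have hvar : ∀ x y : ℝ, eVariationOn γ' (Icc x y) = eVariationOn γ (Icc (-y) (-x)) := by
    intro x y
    rw [hγ', eVariationOn.comp_eq_of_antitoneOn γ _ (hanti (Icc x y)), himg]
  have hco' : ContinuousWithinAt γ' (Icc (-p) (-a)) (-p) := by
    have hmaps : MapsTo (fun z : ℝ => -z) (Icc (-p) (-a)) (Icc a p) := by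
      intro z hz; simp only [mem_Icc] at *; constructor <;> linarith
    have : ContinuousWithinAt (fun z : ℝ => -z) (Icc (-p) (-a)) (-p) :=
      (continuous_neg.continuousWithinAt)
    exact ContinuousWithinAt.comp (by simpa using hco) this hmaps
  have hfin' : eVariationOn γ' (Icc (-p) (-a)) ≠ ⊤ := by
    rw [hvar]; simpa using hfin
  obtain ⟨q', hq', H⟩ := evar_right_small (by linarith) hco' hfin' hC
  refine ⟨-q', by linarith, fun t ht hqt => ?_⟩
  have h1 : -t ∈ Icc (-p) (-a) := ⟨by linarith [ht.2], by linarith [ht.1]⟩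
  have := H (-t) h1 (by linarith)
  rw [hvar] at this
  simp only [neg_neg] at this
  exact this

lemma lbv_of_fin {γ : ℝ → E} {s : Set ℝ} (hfin : eVariationOn γ s ≠ ⊤) :
    LocallyBoundedVariationOn γ s := fun _ _ _ _ =>
  ne_top_of_le_ne_top hfin (eVariationOn.mono γ inter_subset_left)

lemma variation_continuousOn {γ : ℝ → E} (hco : ContinuousOn γ (Icc 0 1))
    (hfin : eVariationOn γ (Icc (0:ℝ) 1) ≠ ⊤) :
    ContinuousOn (fun u => variationOnFromTo γ (Icc 0 1) 0 u) (Icc 0 1) := by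
  set s : Set ℝ := Icc 0 1 with hs
  have lbv : LocallyBoundedVariationOn γ s := lbv_of_fin hfin
  have h01 : (0:ℝ) ∈ s := ⟨le_rfl, by norm_num⟩
  intro p hp
  rw [Metric.continuousWithinAt_iff]
  intro ε hε
  have hC : (0:ℝ≥0∞) < ENNReal.ofReal (ε/2) := by
    simp [ENNReal.ofReal_pos]; linarith
  -- right side
  obtain ⟨qr, hqr, Hr⟩ := evar_right_small (hp.2 : p ≤ 1)
    ((hco p hp).mono (Icc_subset_Icc_left hp.1))
    (ne_top_of_le_ne_top hfin (eVariationOn.mono γ (Icc_subset_Icc_left hp.1))) hC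
  -- left side
  obtain ⟨ql, hql, Hl⟩ := evar_left_small (hp.1 : (0:ℝ) ≤ p)
    ((hco p hp).mono (Icc_subset_Icc_right hp.2))
    (ne_top_of_le_ne_top hfin (eVariationOn.mono γ (Icc_subset_Icc_right hp.2))) hC
  refine ⟨min (qr - p) (p - ql), by simp [hqr, hql, sub_pos], fun {t} ht hdist => ?_⟩
  have hvadd := variationOnFromTo.add lbv h01 (hp : p ∈ s) (ht : t ∈ s)
  have habs : dist (variationOnFromTo γ s 0 t) (variationOnFromTo γ s 0 p)
      = |variationOnFromTo γ s p t| := by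
    rw [Real.dist_eq]
    congr 1
    linarith [hvadd]
  rw [Real.dist_eq] at hdist
  have hlt : ∀ X : ℝ≥0∞, X ≤ ENNReal.ofReal (ε/2) → X.toReal < ε := by
    intro X hX
    have := ENNReal.toReal_mono ENNReal.ofReal_ne_top hX
    rw [ENNReal.toReal_ofReal (by linarith)] at this
    linarith
  rw [habs]
  rcases le_or_gt p t with hpt | htp
  · rw [variationOnFromTo.eq_of_le γ s hpt, abs_of_nonneg ENNReal.toReal_nonneg]
    refine hlt _ (le_trans (eVariationOn.mono γ inter_subset_right) ?_)
    refine Hr t ⟨hpt, ht.2⟩ ?_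
    have : t - p < qr - p := lt_of_le_of_lt (le_abs_self _) (lt_of_lt_of_le hdist (min_le_left _ _))
    linarith
  · rw [variationOnFromTo.eq_of_ge γ s htp.le, abs_neg, abs_of_nonneg ENNReal.toReal_nonneg]
    refine hlt _ (le_trans (eVariationOn.mono γ inter_subset_right) ?_)
    refine Hl t ⟨ht.1, htp.le⟩ ?_
    have h' := lt_of_lt_of_le hdist (min_le_right _ _)
    have h'' := neg_le_abs (t - p)
    linarith
end VarCont

section Reparam
variable {E : Type*} [MetricSpace E]

lemma exists_lipschitz_path (Z : Set E) {γ : ℝ → E} {x y : E} {L : ℝ} (hL : 0 ≤ L)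
    (hc : ContinuousOn γ (Icc 0 1)) (hm : MapsTo γ (Icc 0 1) Z)
    (h0 : γ 0 = x) (h1 : γ 1 = y)
    (hvar : eVariationOn γ (Icc (0:ℝ) 1) ≤ ENNReal.ofReal L) :
    ∃ σ : ℝ → E, (∀ s ∈ Icc (0:ℝ) 1, ∀ t ∈ Icc (0:ℝ) 1, dist (σ s) (σ t) ≤ L * |s - t|) ∧
      MapsTo σ (Icc 0 1) Z ∧ σ 0 = x ∧ σ 1 = y := by
  have hfin : eVariationOn γ (Icc (0:ℝ) 1) ≠ ⊤ := ne_top_of_le_ne_top ENNReal.ofReal_ne_top hvar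
  set s : Set ℝ := Icc 0 1 with hs
  have h0s : (0:ℝ) ∈ s := ⟨le_rfl, by norm_num⟩
  have h1s : (1:ℝ) ∈ s := ⟨by norm_num, le_rfl⟩
  have lbv : LocallyBoundedVariationOn γ s := lbv_of_fin hfin
  set V : ℝ → ℝ := fun u => variationOnFromTo γ s 0 u with hV
  have hVmono : MonotoneOn V s := variationOnFromTo.monotoneOn lbv h0s
  have hV0 : V 0 = 0 := variationOnFromTo.self (f := γ) s 0
  have hVcont : ContinuousOn V s := variation_continuousOn hc hfin
  have hIVT : Icc (V 0) (V 1) ⊆ V '' (Icc 0 1) :=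
    intermediate_value_Icc (by norm_num) hVcont
  have hV1nonneg : 0 ≤ V 1 := variationOnFromTo.nonneg_of_le (f := γ) s (by norm_num)
  have hV1L : V 1 ≤ L := by
    show variationOnFromTo γ s 0 1 ≤ L
    rw [variationOnFromTo.eq_of_le γ s (by norm_num : (0:ℝ) ≤ 1)]
    have he : s ∩ Icc 0 1 = s := by rw [hs, inter_self]
    rw [he]
    calc (eVariationOn γ s).toReal ≤ (ENNReal.ofReal L).toReal :=
          ENNReal.toReal_mono ENNReal.ofReal_ne_top hvar
      _ ≤ L := by rw [ENNReal.toReal_ofReal hL]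
  have hproj : ∀ t : ℝ, max 0 (min t 1) ∈ Icc (0:ℝ) 1 :=
    fun t => ⟨le_max_left _ _, max_le (by norm_num) (min_le_right _ _)⟩
  have hprojeq : ∀ t ∈ Icc (0:ℝ) 1, max 0 (min t 1) = t := by
    intro t ht; rw [min_eq_left ht.2, max_eq_right ht.1]
  have hval : ∀ t : ℝ, ∃ u ∈ Icc (0:ℝ) 1, V u = V 1 * (max 0 (min t 1)) := by
    intro t
    have hmem : V 1 * (max 0 (min t 1)) ∈ Icc (V 0) (V 1) := by
      rw [hV0]
      constructor
      · exact mul_nonneg hV1nonneg (hproj t).1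
      · nlinarith [(hproj t).2, hV1nonneg]
    obtain ⟨u, hu, hVu⟩ := hIVT hmem
    exact ⟨u, hu, hVu⟩
  choose θ hθs hθV using hval
  have hVsub : ∀ a ∈ s, ∀ b ∈ s, variationOnFromTo γ s a b = V b - V a := by
    intro a ha b hb
    have := variationOnFromTo.add lbv h0s ha hb
    rw [hV]; linarith [this]
  have hkey : ∀ a ∈ s, ∀ b ∈ s, a ≤ b → dist (γ a) (γ b) ≤ V b - V a := by
    intro a ha b hb hab
    have hmem1 : a ∈ s ∩ Icc a b := ⟨ha, le_rfl, hab⟩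
    have hmem2 : b ∈ s ∩ Icc a b := ⟨hb, hab, le_rfl⟩
    have hedist := eVariationOn.edist_le γ hmem1 hmem2
    have hfin2 : eVariationOn γ (s ∩ Icc a b) ≠ ⊤ := lbv a b ha hb
    have := ENNReal.toReal_mono hfin2 hedist
    rw [← dist_edist] at this
    rwa [← variationOnFromTo.eq_of_le γ s hab, hVsub a ha b hb] at this
  refine ⟨γ ∘ θ, ?_, fun t _ => hm (hθs t), ?_, ?_⟩
  · intro a ha b hb
    have hVa : V (θ a) = V 1 * a := by rw [hθV a, hprojeq a ha]
    have hVb : V (θ b) = V 1 * b := by rw [hθV b, hprojeq b hb]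
    have habs : dist (γ (θ a)) (γ (θ b)) ≤ |V (θ b) - V (θ a)| := by
      rcases le_total (θ a) (θ b) with h | h
      · exact (hkey _ (hθs a) _ (hθs b) h).trans (le_abs_self _)
      · rw [dist_comm]
        refine (hkey _ (hθs b) _ (hθs a) h).trans ?_
        rw [abs_sub_comm]; exact le_abs_self _
    calc dist (γ (θ a)) (γ (θ b)) ≤ |V (θ b) - V (θ a)| := habs
      _ = V 1 * |b - a| := by rw [hVa, hVb, ← mul_sub, abs_mul, abs_of_nonneg hV1nonneg]
      _ ≤ L * |a - b| := by rw [abs_sub_comm]; exact mul_le_mul_of_nonneg_right hV1L (abs_nonneg _)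
  · have hVθ0 : V (θ 0) = 0 := by
      rw [hθV 0, hprojeq 0 h0s, mul_zero]
    have : variationOnFromTo γ s 0 (θ 0) = 0 := hVθ0
    have hed := variationOnFromTo.edist_zero_of_eq_zero lbv h0s (hθs 0) this
    have : γ 0 = γ (θ 0) := by rwa [edist_eq_zero] at hed
    simp only [Function.comp_apply]
    rw [← this, h0]
  · have hVθ1 : V (θ 1) = V 1 := by
      rw [hθV 1, hprojeq 1 h1s, mul_one]
    have : variationOnFromTo γ s (θ 1) 1 = 0 := by
      rw [hVsub _ (hθs 1) _ h1s, hVθ1, sub_self]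
    have hed := variationOnFromTo.edist_zero_of_eq_zero lbv (hθs 1) h1s this
    have : γ (θ 1) = γ 1 := by rwa [edist_eq_zero] at hed
    simp only [Function.comp_apply]
    rw [this, h1]

end Reparam


noncomputable def innerDist {E : Type*} [NormedAddCommGroup E] (Z : Set E) (x y : E) : ENNReal :=
  ⨅ (γ : ℝ → E) (_ : ContinuousOn γ (Set.Icc 0 1)) (_ : Set.MapsTo γ (Set.Icc 0 1) Z)
    (_ : γ 0 = x) (_ : γ 1 = y), eVariationOn γ (Set.Icc 0 1)

def IsLNE {E : Type*} [NormedAddCommGroup E] (Z : Set E) (C : ℝ) : Prop :=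
  ∀ x ∈ Z, ∀ y ∈ Z, innerDist Z x y ≤ ENNReal.ofReal (C * ‖x - y‖)

/-- The tangent cone of `X` at `0`: limits of `(1/tᵢ)·xᵢ` with `xᵢ ∈ X`, `xᵢ → 0`, `tᵢ > 0`. -/
def tangentCone0 {E : Type*} [NormedAddCommGroup E] [NormedSpace ℝ E] (X : Set E) : Set E :=
  {v | ∃ (x : ℕ → E) (t : ℕ → ℝ), (∀ i, x i ∈ X) ∧ (∀ i, 0 < t i) ∧
    Filter.Tendsto x Filter.atTop (nhds 0) ∧
    Filter.Tendsto (fun i => (t i)⁻¹ • x i) Filter.atTop (nhds v)}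

lemma tangentCone0_isClosed {E : Type*} [NormedAddCommGroup E] [NormedSpace ℝ E] (X : Set E) :
    IsClosed (tangentCone0 X) := by
  rw [← isSeqClosed_iff_isClosed]
  intro f v hf hfv
  choose xs ts hxX hts hx0 hxv using hf
  have key : ∀ k : ℕ, ∃ i, ‖xs k i‖ < 1/(k+1) ∧
      dist ((ts k i)⁻¹ • xs k i) (f k) < 1/(k+1) := by
    intro k
    have h1 : ∀ᶠ i in atTop, ‖xs k i‖ < 1/((k:ℝ)+1) := by
      have h := tendsto_zero_iff_norm_tendsto_zero.mp (hx0 k)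
      exact h.eventually (gt_mem_nhds (by positivity))
    have h2 : ∀ᶠ i in atTop, dist ((ts k i)⁻¹ • xs k i) (f k) < 1/((k:ℝ)+1) := by
      have h := tendsto_iff_dist_tendsto_zero.mp (hxv k)
      exact h.eventually (gt_mem_nhds (by positivity))
    exact (h1.and h2).exists
  choose idx h1 h2 using key
  refine ⟨fun k => xs k (idx k), fun k => ts k (idx k), fun k => hxX k (idx k),
    fun k => hts k (idx k), ?_, ?_⟩
  · exact squeeze_zero_norm (fun k => (h1 k).le) tendsto_one_div_add_atTop_nhds_zero_nat
  · rw [tendsto_iff_dist_tendsto_zero]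
    have hd : Tendsto (fun k => dist (f k) v) atTop (𝓝 0) :=
      tendsto_iff_dist_tendsto_zero.mp hfv
    have hg : Tendsto (fun (k:ℕ) => 1/((k:ℝ)+1) + dist (f k) v) atTop (𝓝 0) := by
      have := tendsto_one_div_add_atTop_nhds_zero_nat.add hd
      simpa using this
    refine squeeze_zero (fun k => dist_nonneg)
      (g := fun (k:ℕ) => 1/((k:ℝ)+1) + dist (f k) v) (fun k => ?_) hg
    calc dist ((ts k (idx k))⁻¹ • xs k (idx k)) v
        ≤ dist ((ts k (idx k))⁻¹ • xs k (idx k)) (f k) + dist (f k) v := dist_triangle _ _ _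
      _ ≤ 1/((k:ℝ)+1) + dist (f k) v := add_le_add (h2 k).le le_rfl

theorem stmt_17 {m : ℕ} (X : Set (EuclideanSpace ℝ (Fin m))) (hX : IsClosed X)
    (h0 : (0 : EuclideanSpace ℝ (Fin m)) ∈ X) (C ε : ℝ) (hC : 1 ≤ C) (hε : 0 < ε)
    (hH : Filter.Tendsto
      (fun t : ℝ => Metric.hausdorffDist ((t⁻¹ • X) ∩ Metric.sphere 0 1)
        (tangentCone0 X ∩ Metric.sphere 0 1))
      (𝓝[>] (0:ℝ)) (𝓝 0))
    (hU : ∀ t ∈ Set.Ioc (0:ℝ) ε, IsLNE ((t⁻¹ • X) ∩ Metric.sphere 0 1) C) :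
    IsLNE (tangentCone0 X ∩ Metric.sphere 0 1) C := by
  intro v hv w hw
  classical
  set X0 : Set (EuclideanSpace ℝ (Fin m)) := tangentCone0 X ∩ Metric.sphere 0 1 with hX0
  have hX0closed : IsClosed X0 := (tangentCone0_isClosed X).inter Metric.isClosed_sphere
  have hX0ne : X0.Nonempty := ⟨v, hv⟩
  have hsphbdd : Bornology.IsBounded (Metric.sphere (0:EuclideanSpace ℝ (Fin m)) 1) :=
    (isCompact_sphere _ _).isBounded
  have hX0bdd : Bornology.IsBounded X0 := hsphbdd.subset inter_subset_right
  set D : ℝ := ‖v - w‖ with hD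
  have hD0 : (0:ℝ) ≤ D := norm_nonneg _
  have hC0 : (0:ℝ) < C := lt_of_lt_of_le one_pos hC
  set u : ℕ → ℝ := fun n => 1/((n:ℝ)+1) with hu
  have hupos : ∀ n, 0 < u n := fun n => by positivity
  have hu0 : Tendsto u atTop (𝓝 0) := tendsto_one_div_add_atTop_nhds_zero_nat
  -- X has points of arbitrarily small positive norm
  obtain ⟨xs, ts, hxX, hts, hx0, hxv⟩ := hv.1
  have hxsmall : ∀ c : ℝ, 0 < c → ∃ i, ‖xs i‖ < c ∧ xs i ≠ 0 := by
    intro c hc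
    have h1 : ∀ᶠ i in atTop, ‖xs i‖ < c :=
      (tendsto_zero_iff_norm_tendsto_zero.mp hx0).eventually (gt_mem_nhds hc)
    have h2 : ∀ᶠ i in atTop, xs i ≠ 0 := by
      have hnv : ‖v‖ = 1 := by simpa using mem_sphere_zero_iff_norm.mp hv.2
      have hev : ∀ᶠ i in atTop, (1:ℝ)/2 < ‖(ts i)⁻¹ • xs i‖ := by
        refine (hxv.norm).eventually (lt_mem_nhds ?_)
        rw [hnv]; norm_num
      refine hev.mono fun i hi h0i => ?_
      rw [h0i, smul_zero, norm_zero] at hi; linarith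
    exact (h1.and h2).exists
  -- choose scales
  have hexist : ∀ n : ℕ, ∃ t : ℝ, t ∈ Set.Ioc (0:ℝ) ε ∧
      Metric.hausdorffDist ((t⁻¹ • X) ∩ Metric.sphere 0 1) X0 < u n ∧
      ((t⁻¹ • X) ∩ Metric.sphere 0 1).Nonempty := by
    intro n
    have hmem := hH (Iio_mem_nhds (hupos n))
    rw [mem_map, mem_nhdsGT_iff_exists_Ioo_subset] at hmem
    obtain ⟨a, ha, hsub⟩ := hmem
    obtain ⟨i, hi1, hi2⟩ := hxsmall (min a ε) (lt_min ha hε)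
    have hpos : (0:ℝ) < ‖xs i‖ := norm_pos_iff.mpr hi2
    refine ⟨‖xs i‖, ⟨hpos, (hi1.trans_le (min_le_right _ _)).le⟩, ?_, ?_⟩
    · exact hsub ⟨hpos, hi1.trans_le (min_le_left _ _)⟩
    · refine ⟨‖xs i‖⁻¹ • xs i, Set.smul_mem_smul_set (hxX i), ?_⟩
      rw [mem_sphere_zero_iff_norm, norm_smul, Real.norm_eq_abs,
        abs_of_nonneg (inv_nonneg.mpr hpos.le), inv_mul_cancel₀ hpos.ne']
  choose t ht hdist hne using hexist
  have hEd : ∀ n, EMetric.hausdorffEdist ((t n)⁻¹ • X ∩ Metric.sphere 0 1) X0 ≠ ⊤ := fun n =>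
    Metric.hausdorffEdist_ne_top_of_nonempty_of_bounded (hne n) hX0ne
      (hsphbdd.subset inter_subset_right) hX0bdd
  -- endpoints
  have hxn : ∀ n, ∃ z ∈ (t n)⁻¹ • X ∩ Metric.sphere 0 1, dist v z < 2 * u n := by
    intro n
    refine Metric.exists_dist_lt_of_hausdorffDist_lt (hv : v ∈ X0) ?_ ?_
    · rw [Metric.hausdorffDist_comm]
      calc Metric.hausdorffDist _ X0 < u n := hdist n
        _ < 2 * u n := by linarith [hupos n]
    · rw [EMetric.hausdorffEdist_comm]; exact hEd n
  have hyn : ∀ n, ∃ z ∈ (t n)⁻¹ • X ∩ Metric.sphere 0 1, dist w z < 2 * u n := by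
    intro n
    refine Metric.exists_dist_lt_of_hausdorffDist_lt (hw : w ∈ X0) ?_ ?_
    · rw [Metric.hausdorffDist_comm]
      calc Metric.hausdorffDist _ X0 < u n := hdist n
        _ < 2 * u n := by linarith [hupos n]
    · rw [EMetric.hausdorffEdist_comm]; exact hEd n
  choose xn hxnmem hxnd using hxn
  choose yn hynmem hynd using hyn
  -- Lipschitz curves in the approximating sets
  set L : ℕ → ℝ := fun n => C*(D + 4*u n) + u n with hLdef
  have hLpos : ∀ n, 0 ≤ L n := fun n => by
    have := hupos n; have := hD0; positivity
  have hcurve : ∀ n, ∃ σ : ℝ → EuclideanSpace ℝ (Fin m),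
      (∀ a ∈ Icc (0:ℝ) 1, ∀ b ∈ Icc (0:ℝ) 1, dist (σ a) (σ b) ≤ L n * |a - b|) ∧
      MapsTo σ (Icc 0 1) ((t n)⁻¹ • X ∩ Metric.sphere 0 1) ∧ σ 0 = xn n ∧ σ 1 = yn n := by
    intro n
    have hLNE := hU (t n) (ht n)
    have hblt : innerDist ((t n)⁻¹ • X ∩ Metric.sphere 0 1) (xn n) (yn n) <
        ENNReal.ofReal (C * ‖xn n - yn n‖) + ENNReal.ofReal (u n) := by
      refine lt_of_le_of_lt (hLNE _ (hxnmem n) _ (hynmem n)) ?_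
      refine ENNReal.lt_add_right ENNReal.ofReal_ne_top ?_
      rw [ne_eq, ENNReal.ofReal_eq_zero, not_le]
      exact hupos n
    rw [innerDist] at hblt
    simp only [iInf_lt_iff] at hblt
    obtain ⟨γ, hγc, hγm, hγ0, hγ1, hγvar⟩ := hblt
    have hnorm : ‖xn n - yn n‖ ≤ D + 4 * u n := by
      have h1 := hxnd n
      have h2 := hynd n
      have hvw : dist v w = D := by rw [hD, dist_eq_norm]
      calc ‖xn n - yn n‖ = dist (xn n) (yn n) := (dist_eq_norm _ _).symm
        _ ≤ dist (xn n) v + dist v w + dist w (yn n) := dist_triangle4 _ _ _ _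
        _ ≤ 2*u n + D + 2*u n := by
            rw [dist_comm (xn n) v, hvw]
            exact add_le_add (add_le_add h1.le le_rfl) h2.le
        _ = D + 4*u n := by ring
    refine exists_lipschitz_path _ (hLpos n) hγc hγm hγ0 hγ1 ?_
    calc eVariationOn γ (Icc (0:ℝ) 1)
        ≤ ENNReal.ofReal (C * ‖xn n - yn n‖) + ENNReal.ofReal (u n) := hγvar.le
      _ = ENNReal.ofReal (C * ‖xn n - yn n‖ + u n) :=
          (ENNReal.ofReal_add (by positivity) (hupos n).le).symm
      _ ≤ ENNReal.ofReal (L n) := by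
          refine ENNReal.ofReal_le_ofReal ?_
          rw [hLdef]
          have := mul_le_mul_of_nonneg_left hnorm hC0.le
          simp only []
          linarith
  choose σ hσlip hσmem hσ0 hσ1 using hcurve
  -- ultrafilter limit
  set F : Ultrafilter ℕ := Ultrafilter.of atTop with hF
  have hFle : (F : Filter ℕ) ≤ atTop := Ultrafilter.of_le _
  set proj : ℝ → ℝ := fun r => max 0 (min r 1) with hproj
  have hprojmem : ∀ r, proj r ∈ Icc (0:ℝ) 1 :=
    fun r => ⟨le_max_left _ _, max_le (by norm_num) (min_le_right _ _)⟩
  have hprojeq : ∀ r ∈ Icc (0:ℝ) 1, proj r = r := by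
    intro r hr; rw [hproj]; simp only []; rw [min_eq_left hr.2, max_eq_right hr.1]
  have hlim : ∀ r : ℝ, ∃ z ∈ Metric.sphere (0:EuclideanSpace ℝ (Fin m)) 1,
      Tendsto (fun n => σ n (proj r)) F (𝓝 z) := by
    intro r
    have hc := isCompact_sphere (0 : EuclideanSpace ℝ (Fin m)) 1
    have hle : (F.map (fun n => σ n (proj r)) : Filter (EuclideanSpace ℝ (Fin m))) ≤
        𝓟 (Metric.sphere 0 1) := by
      rw [Ultrafilter.coe_map, le_principal_iff, mem_map]
      exact Filter.Eventually.of_forall fun n => (hσmem n (hprojmem r)).2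
    obtain ⟨z, hz, hzle⟩ := hc.ultrafilter_le_nhds (F.map (fun n => σ n (proj r))) hle
    refine ⟨z, hz, ?_⟩
    rwa [Ultrafilter.coe_map] at hzle
  choose Γ hΓsphere hΓtend using hlim
  have hΓtend' : ∀ r ∈ Icc (0:ℝ) 1, Tendsto (fun n => σ n r) F (𝓝 (Γ r)) := by
    intro r hr
    have := hΓtend r
    rwa [hprojeq r hr] at this
  -- Lipschitz bound for Γ
  have hLtend : Tendsto L atTop (𝓝 (C*D)) := by
    have h1 : Tendsto (fun n => C*(D + 4*u n) + u n) atTop (𝓝 (C*(D + 4*0) + 0)) :=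
      (((tendsto_const_nhds.add (hu0.const_mul 4)).const_mul C)).add hu0
    have h2 : C*(D + 4*(0:ℝ)) + 0 = C*D := by ring
    rwa [h2] at h1
  have hΓlip : ∀ a ∈ Icc (0:ℝ) 1, ∀ b ∈ Icc (0:ℝ) 1,
      dist (Γ a) (Γ b) ≤ (C*D) * |a - b| := by
    intro a ha b hb
    have h1 : Tendsto (fun n => dist (σ n a) (σ n b)) F (𝓝 (dist (Γ a) (Γ b))) :=
      (hΓtend' a ha).dist (hΓtend' b hb)
    have h2 : Tendsto (fun n => L n * |a - b|) F (𝓝 ((C*D) * |a - b|)) :=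
      (hLtend.mul_const _).mono_left hFle
    exact le_of_tendsto_of_tendsto' h1 h2 (fun n => hσlip n a ha b hb)
  -- endpoints
  have hΓ0 : Γ 0 = v := by
    have h1 : Tendsto (fun n => σ n 0) F (𝓝 (Γ 0)) :=
      hΓtend' 0 ⟨le_rfl, by norm_num⟩
    have h2 : Tendsto (fun n => σ n 0) F (𝓝 v) := by
      have : Tendsto (fun n => xn n) atTop (𝓝 v) := by
        rw [tendsto_iff_dist_tendsto_zero]
        refine squeeze_zero (fun n => dist_nonneg) (g := fun n => 2 * u n) (fun n => ?_) ?_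
        · rw [dist_comm]; exact (hxnd n).le
        · have h3 := hu0.const_mul 2
          rw [mul_zero] at h3
          exact h3
      simp only [hσ0]
      exact this.mono_left hFle
    exact tendsto_nhds_unique h1 h2
  have hΓ1 : Γ 1 = w := by
    have h1 : Tendsto (fun n => σ n 1) F (𝓝 (Γ 1)) :=
      hΓtend' 1 ⟨by norm_num, le_rfl⟩
    have h2 : Tendsto (fun n => σ n 1) F (𝓝 w) := by
      have : Tendsto (fun n => yn n) atTop (𝓝 w) := by
        rw [tendsto_iff_dist_tendsto_zero]
        refine squeeze_zero (fun n => dist_nonneg) (g := fun n => 2 * u n) (fun n => ?_) ?_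
        · rw [dist_comm]; exact (hynd n).le
        · have h3 := hu0.const_mul 2
          rw [mul_zero] at h3
          exact h3
      simp only [hσ1]
      exact this.mono_left hFle
    exact tendsto_nhds_unique h1 h2
  -- membership
  have hΓmem : MapsTo Γ (Icc 0 1) X0 := by
    intro a ha
    have hstep : ∀ n, Metric.infDist (σ n a) X0 ≤ u n := fun n =>
      le_trans (Metric.infDist_le_hausdorffDist_of_mem (hσmem n ha) (hEd n)) (hdist n).le
    have h1 : Tendsto (fun n => Metric.infDist (σ n a) X0) F (𝓝 (Metric.infDist (Γ a) X0)) :=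
      ((continuous_infDist_pt X0).tendsto _).comp (hΓtend' a ha)
    have h2 : Tendsto u F (𝓝 0) := hu0.mono_left hFle
    have hle0 : Metric.infDist (Γ a) X0 ≤ 0 := le_of_tendsto_of_tendsto' h1 h2 hstep
    have heq : Metric.infDist (Γ a) X0 = 0 := le_antisymm hle0 Metric.infDist_nonneg
    exact (hX0closed.mem_iff_infDist_zero hX0ne).mpr heq
  -- continuity and variation bound
  have hCD0 : (0:ℝ) ≤ C*D := by positivity
  have hΓlipOn : LipschitzOnWith (Real.toNNReal (C*D)) Γ (Icc 0 1) := by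
    refine LipschitzOnWith.of_dist_le_mul fun a ha b hb => ?_
    rw [Real.coe_toNNReal _ hCD0, Real.dist_eq]
    exact hΓlip a ha b hb
  have hΓcont : ContinuousOn Γ (Icc 0 1) := hΓlipOn.continuousOn
  have hΓvar : eVariationOn Γ (Icc (0:ℝ) 1) ≤ ENNReal.ofReal (C*D) := by
    have hid : eVariationOn (id : ℝ → ℝ) (Icc (0:ℝ) 1) ≤ ENNReal.ofReal 1 := by
      have := monotoneOn_id.eVariationOn_le (f := (id : ℝ → ℝ)) (s := Icc (0:ℝ) 1)
        (a := 0) (b := 1) ⟨le_rfl, by norm_num⟩ ⟨by norm_num, le_rfl⟩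
      rw [inter_self] at this
      simpa using this
    have hcomp := hΓlipOn.comp_eVariationOn_le (g := (id : ℝ → ℝ)) (s := Icc (0:ℝ) 1)
      (Set.mapsTo_id _)
    rw [Function.comp_id] at hcomp
    calc eVariationOn Γ (Icc (0:ℝ) 1)
        ≤ (Real.toNNReal (C*D) : ℝ≥0∞) * eVariationOn (id : ℝ → ℝ) (Icc (0:ℝ) 1) := hcomp
      _ ≤ (Real.toNNReal (C*D) : ℝ≥0∞) * ENNReal.ofReal 1 := by gcongr
      _ = ENNReal.ofReal (C*D) := by
          rw [ENNReal.ofReal_one, mul_one]; rfl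
  -- conclude
  calc innerDist X0 v w ≤ eVariationOn Γ (Icc (0:ℝ) 1) := by
        refine iInf_le_of_le Γ (iInf_le_of_le hΓcont (iInf_le_of_le hΓmem
          (iInf_le_of_le hΓ0 (iInf_le _ hΓ1))))
    _ ≤ ENNReal.ofReal (C*D) := hΓvar
    _ = ENNReal.ofReal (C * ‖v - w‖) := by rw [hD]
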